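/- With the setup of the canal surface X(u,v) = γ(u) + r(u)(M₂(u) cos v + M₃(u) sin v) along a unit-speed curve with orthonormal parallel transport frame, the coefficients of the first fundamental form are E = f² + r'², F = 0, G = r², where f = 1 − k₂ r cos v − k₃ r sin v. -/
import Mathlib
set_option maxHeartbeats 1000000


open Real InnerProductSpace

/-- First fundamental form of the canal surface
`X(u,v) = γ(u) + r(u)(cos v • M₂(u) + sin v • M₃(u))` along a unit-speed curve with
orthonormal parallel transport frame: `E = f² + r'²`, `F = 0`, `G = r²`, where
`f = 1 - k₂ r cos v - k₃ r sin v`. -/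
theorem stmt_3 (γ T M₁ M₂ M₃ : ℝ → EuclideanSpace ℝ (Fin 4))
    (k₁ k₂ k₃ r r' : ℝ → ℝ)
    (horth : ∀ u, ‖T u‖ = 1 ∧ ‖M₁ u‖ = 1 ∧ ‖M₂ u‖ = 1 ∧ ‖M₃ u‖ = 1 ∧
      ⟪T u, M₁ u⟫_ℝ = 0 ∧ ⟪T u, M₂ u⟫_ℝ = 0 ∧ ⟪T u, M₃ u⟫_ℝ = 0 ∧
      ⟪M₁ u, M₂ u⟫_ℝ = 0 ∧ ⟪M₁ u, M₃ u⟫_ℝ = 0 ∧ ⟪M₂ u, M₃ u⟫_ℝ = 0)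
    (hγ : ∀ u, HasDerivAt γ (T u) u)
    (hT : ∀ u, HasDerivAt T (k₁ u • M₁ u + k₂ u • M₂ u + k₃ u • M₃ u) u)
    (hM₁ : ∀ u, HasDerivAt M₁ (-(k₁ u) • T u) u)
    (hM₂ : ∀ u, HasDerivAt M₂ (-(k₂ u) • T u) u)
    (hM₃ : ∀ u, HasDerivAt M₃ (-(k₃ u) • T u) u)
    (hr : ∀ u, HasDerivAt r (r' u) u)
    (X : ℝ → ℝ → EuclideanSpace ℝ (Fin 4))
    (hX : ∀ u v, X u v = γ u + r u • (cos v • M₂ u + sin v • M₃ u))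
    (Xu Xv : ℝ → ℝ → EuclideanSpace ℝ (Fin 4))
    (hXu : ∀ u v, HasDerivAt (fun t => X t v) (Xu u v) u)
    (hXv : ∀ u v, HasDerivAt (fun w => X u w) (Xv u v) v)
    (f : ℝ → ℝ → ℝ)
    (hf : ∀ u v, f u v = 1 - k₂ u * r u * cos v - k₃ u * r u * sin v) :
    ∀ u v, ⟪Xu u v, Xu u v⟫_ℝ = f u v ^ 2 + r' u ^ 2 ∧
      ⟪Xu u v, Xv u v⟫_ℝ = 0 ∧
      ⟪Xv u v, Xv u v⟫_ℝ = r u ^ 2 := by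
  intro u v
  obtain ⟨hT1, hM11, hM21, hM31, hTM1, hTM2, hTM3, hM12, hM13, hM23⟩ := horth u
  -- compute Xu
  have hfun : (fun t => X t v) = fun t => γ t + r t • (cos v • M₂ t + sin v • M₃ t) :=
    funext fun t => hX t v
  have h1 : HasDerivAt (fun t => X t v)
      (T u + (r u • (cos v • (-(k₂ u) • T u) + sin v • (-(k₃ u) • T u)) +
        r' u • (cos v • M₂ u + sin v • M₃ u))) u := by
    rw [hfun]
    exact (hγ u).add ((hr u).smul
      (((hM₂ u).const_smul (cos v)).add ((hM₃ u).const_smul (sin v))))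
  have hu : Xu u v = T u + (r u • (cos v • (-(k₂ u) • T u) + sin v • (-(k₃ u) • T u)) +
      r' u • (cos v • M₂ u + sin v • M₃ u)) :=
    (hXu u v).unique h1
  -- compute Xv
  have hfun2 : (fun w => X u w) = fun w => γ u + r u • (cos w • M₂ u + sin w • M₃ u) :=
    funext fun w => hX u w
  have h2 : HasDerivAt (fun w => X u w)
      (r u • (((-sin v) • M₂ u) + (cos v • M₃ u))) v := by
    rw [hfun2]
    exact (((hasDerivAt_cos v).smul_const (M₂ u)).add
      ((hasDerivAt_sin v).smul_const (M₃ u))).const_smul (r u) |>.const_add (γ u)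
  have hv : Xv u v = r u • (((-sin v) • M₂ u) + (cos v • M₃ u)) :=
    (hXv u v).unique h2
  have hTT : ⟪T u, T u⟫_ℝ = 1 := by
    rw [real_inner_self_eq_norm_sq, hT1]; norm_num
  have hM22 : ⟪M₂ u, M₂ u⟫_ℝ = 1 := by
    rw [real_inner_self_eq_norm_sq, hM21]; norm_num
  have hM33 : ⟪M₃ u, M₃ u⟫_ℝ = 1 := by
    rw [real_inner_self_eq_norm_sq, hM31]; norm_num
  have hM2T : ⟪M₂ u, T u⟫_ℝ = 0 := by rw [real_inner_comm]; exact hTM2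
  have hM3T : ⟪M₃ u, T u⟫_ℝ = 0 := by rw [real_inner_comm]; exact hTM3
  have hM32 : ⟪M₃ u, M₂ u⟫_ℝ = 0 := by rw [real_inner_comm]; exact hM23
  have hsc : sin v ^ 2 + cos v ^ 2 = 1 := sin_sq_add_cos_sq v
  refine ⟨?_, ?_, ?_⟩ <;>
    simp only [hu, hv, hf, inner_add_left, inner_add_right,
      real_inner_smul_left, real_inner_smul_right, hTT, hM22, hM33, hTM2, hTM3,
      hM23, hM2T, hM3T, hM32] <;> ring_nf <;> nlinarith [hsc]
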